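/- Let (f_n)_{n∈ℕ} be a sequence of complex polynomials whose degrees are bounded by a fixed integer N, and suppose the sequence converges coefficient-wise to a nonzero polynomial f. Then for every ζ ∈ ℂ, the following are equivalent: (i) f(ζ) = 0; (ii) for every ε > 0 there exists n₀ ∈ ℕ such that for all n > n₀ the polynomial f_n has a root in the open disk {w ∈ ℂ : |w − ζ| < ε}. -/

import Mathlib

open Filter

private lemma key_bound (N : ℕ) (ζ w : ℂ) (ε : ℝ) (p : Polynomial ℂ)
    (hpd : p.natDegree ≤ N)
    (hroots : ∀ z : ℂ, ‖z - ζ‖ < ε → p.eval z ≠ 0)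
    (hw : ‖w - ζ‖ ≤ ε / 2) :
    ‖p.eval w‖ ≤ (3/2 : ℝ)^N * ‖p.eval ζ‖ := by
  have hp := (Polynomial.C_leadingCoeff_mul_prod_multiset_X_sub_C (IsAlgClosed.card_roots_eq_natDegree (p := p))).symm
  have hev : ∀ x : ℂ, ‖p.eval x‖ = ‖p.leadingCoeff‖ * (p.roots.map fun a => ‖x - a‖).prod := by
    intro x
    conv_lhs => rw [hp]
    rw [show ∀ z : ℂ, ‖z‖ = (normHom : ℂ →*₀ ℝ) z from fun _ => rfl]
    rw [Polynomial.eval_mul, map_mul, Polynomial.eval_multiset_prod,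
      Multiset.map_map, map_multiset_prod, Multiset.map_map]
    simp [Function.comp_def]
  have hroot_far : ∀ a ∈ p.roots, ε ≤ ‖ζ - a‖ := by
    intro a ha
    have h2 : p.eval a = 0 := Polynomial.isRoot_of_mem_roots ha
    by_contra hlt
    push_neg at hlt
    rw [norm_sub_rev] at hlt
    exact hroots a hlt h2
  rw [hev w, hev ζ]
  have hple : (p.roots.map fun a => ‖w - a‖).prod
      ≤ (p.roots.map fun a => (3/2 : ℝ) * ‖ζ - a‖).prod := by
    apply Multiset.prod_map_le_prod_map₀
    · intro a _; positivity
    · intro a ha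
      have h1 : ‖w - a‖ ≤ ‖w - ζ‖ + ‖ζ - a‖ := by
        calc ‖w - a‖ = ‖(w - ζ) + (ζ - a)‖ := by ring_nf
          _ ≤ _ := norm_add_le _ _
      have h2 := hroot_far a ha
      have hw' : (‖w - ζ‖ : ℝ) ≤ ε / 2 := hw
      nlinarith [norm_nonneg (ζ - a)]
  have hconst : (p.roots.map fun a => (3/2 : ℝ) * ‖ζ - a‖).prod
      = (3/2 : ℝ) ^ Multiset.card p.roots * (p.roots.map fun a => ‖ζ - a‖).prod := by
    rw [Multiset.prod_map_mul]
    congr 1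
    simp [Multiset.map_const', Multiset.prod_replicate]
  rw [hconst] at hple
  have hcard : (3/2 : ℝ) ^ Multiset.card p.roots ≤ (3/2 : ℝ) ^ N :=
    pow_le_pow_right₀ (by norm_num) ((p.card_roots').trans hpd)
  have hPnn : (0:ℝ) ≤ (p.roots.map fun a => ‖ζ - a‖).prod :=
    Multiset.prod_nonneg (by
      intro x hx
      obtain ⟨a, _, rfl⟩ := Multiset.mem_map.mp hx
      positivity)
  calc ‖p.leadingCoeff‖ * (p.roots.map fun a => ‖w - a‖).prod
      ≤ ‖p.leadingCoeff‖ * ((3/2 : ℝ) ^ N * (p.roots.map fun a => ‖ζ - a‖).prod) := by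
        apply mul_le_mul_of_nonneg_left _ (norm_nonneg _)
        exact hple.trans (mul_le_mul_of_nonneg_right hcard hPnn)
    _ = (3/2 : ℝ)^N * (‖p.leadingCoeff‖ * (p.roots.map fun a => ‖ζ - a‖).prod) := by ring

private lemma eval_norm_bound (N : ℕ) (p : Polynomial ℂ) (hp : p.natDegree ≤ N) (z : ℂ)
    (M : ℝ) (hz : ‖z‖ ≤ M) :
    ‖p.eval z‖ ≤ ∑ k ∈ Finset.range (N+1), ‖p.coeff k‖ * M^k := by
  rw [Polynomial.eval_eq_sum_range' (Nat.lt_succ_of_le hp)]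
  refine (norm_sum_le _ _).trans (Finset.sum_le_sum fun k _ => ?_)
  rw [norm_mul, norm_pow]
  exact mul_le_mul_of_nonneg_left (pow_le_pow_left₀ (norm_nonneg _) hz k) (norm_nonneg _)

/-- If a sequence of complex polynomials of degree at most `N`
converges coefficient-wise to a nonzero polynomial `g`, then `ζ` is a root of
`g` iff eventually every `f n` has a root in every disk around `ζ`. -/
theorem statement4 (N : ℕ) (f : ℕ → Polynomial ℂ) (g : Polynomial ℂ)
    (hdeg : ∀ n, (f n).degree ≤ N) (hg : g ≠ 0)
    (hconv : ∀ k : ℕ, Tendsto (fun n => (f n).coeff k) atTop (nhds (g.coeff k)))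
    (ζ : ℂ) :
    g.eval ζ = 0 ↔
      ∀ ε : ℝ, 0 < ε → ∃ n₀ : ℕ, ∀ n > n₀,
        ∃ z : ℂ, ‖z - ζ‖ < ε ∧ (f n).eval z = 0 := by
  have hfn : ∀ n, (f n).natDegree ≤ N := fun n => Polynomial.natDegree_le_iff_degree_le.mpr (hdeg n)
  have hgN : g.natDegree ≤ N := by
    rw [Polynomial.natDegree_le_iff_coeff_eq_zero]
    intro m hm
    have h0 : ∀ n, (f n).coeff m = 0 := fun n =>
      Polynomial.coeff_eq_zero_of_degree_lt (lt_of_le_of_lt (hdeg n) (by exact_mod_cast hm))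
    exact (show (0:ℂ) = g.coeff m by simpa [h0] using hconv m).symm
  have heval : ∀ z : ℂ, Tendsto (fun n => (f n).eval z) atTop (nhds (g.eval z)) := by
    intro z
    have hrw : ∀ n, (f n).eval z = ∑ k ∈ Finset.range (N+1), (f n).coeff k * z^k :=
      fun n => Polynomial.eval_eq_sum_range' (Nat.lt_succ_of_le (hfn n)) z
    rw [Polynomial.eval_eq_sum_range' (Nat.lt_succ_of_le hgN) z]
    simp only [hrw]
    exact tendsto_finset_sum _ fun k _ => (hconv k).mul tendsto_const_nhds
  constructor
  · -- forward direction
    intro h0 ε hε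
    by_contra hc
    push_neg at hc
    -- choose w near ζ with g.eval w ≠ 0
    have hfin : {x : ℂ | g.IsRoot x}.Finite := Polynomial.finite_setOf_isRoot hg
    have hSfin : {d : ℝ | g.IsRoot (ζ + d)}.Finite := by
      have : {d : ℝ | g.IsRoot (ζ + d)} = (fun d : ℝ => ζ + (d : ℂ)) ⁻¹' {x | g.IsRoot x} := rfl
      rw [this]
      apply Set.Finite.preimage _ hfin
      intro a _ b _ hab
      exact_mod_cast add_left_cancel hab
    obtain ⟨d, hd⟩ := ((Set.Ioo_infinite (by linarith : (0:ℝ) < ε/2)).diff hSfin).nonempty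
    obtain ⟨⟨hd0, hd2⟩, hdroot⟩ := hd
    set w : ℂ := ζ + d with hwdef
    have hwroot : g.eval w ≠ 0 := hdroot
    have hwdist : ‖w - ζ‖ ≤ ε / 2 := by
      have : w - ζ = (d : ℂ) := by rw [hwdef]; ring
      rw [this]
      rw [Complex.norm_real, Real.norm_eq_abs]
      rw [abs_of_pos hd0]
      linarith
    set B := ‖g.eval w‖ with hBdef
    have hB : 0 < B := norm_pos_iff.mpr hwroot
    have h1 : ∀ᶠ n in atTop, B / 2 < ‖(f n).eval w‖ :=
      (heval w).norm.eventually_const_lt (by linarith)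
    have h2 : ∀ᶠ n in atTop, ‖(f n).eval ζ‖ < (2/3 : ℝ)^N * (B/2) := by
      apply (heval ζ).norm.eventually_lt_const
      rw [h0]
      simp only [norm_zero]
      positivity
    obtain ⟨n₁, hn₁⟩ := eventually_atTop.mp (h1.and h2)
    obtain ⟨n, hn, hnoroot⟩ := hc n₁
    obtain ⟨hb1, hb2⟩ := hn₁ n (le_of_lt hn)
    have hkey := key_bound N ζ w ε (f n) (hfn n) hnoroot hwdist
    have : ‖(f n).eval w‖ < B / 2 := by
      calc ‖(f n).eval w‖ ≤ (3/2 : ℝ)^N * ‖(f n).eval ζ‖ := hkey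
        _ < (3/2 : ℝ)^N * ((2/3 : ℝ)^N * (B/2)) := by
            apply mul_lt_mul_of_pos_left hb2
            positivity
        _ = ((3/2 : ℝ) * (2/3 : ℝ))^N * (B/2) := by rw [mul_pow]; ring
        _ = B / 2 := by norm_num
    linarith
  · -- backward direction
    intro h
    by_contra hne
    set δ := ‖g.eval ζ‖ with hδdef
    have hδ : 0 < δ := norm_pos_iff.mpr hne
    obtain ⟨ε, hεpos, hεball⟩ := Metric.continuousAt_iff.mp ((Polynomial.continuous g).continuousAt) (δ/2) (by linarith)
    set M := ‖ζ‖ + 1 with hMdef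
    have hS : Tendsto (fun n => ∑ k ∈ Finset.range (N+1), ‖(f n).coeff k - g.coeff k‖ * M^k)
        atTop (nhds 0) := by
      have hterm : ∀ k ∈ Finset.range (N+1),
          Tendsto (fun n => ‖(f n).coeff k - g.coeff k‖ * M^k) atTop (nhds 0) := by
        intro k _
        have h1 : Tendsto (fun n => (f n).coeff k - g.coeff k) atTop (nhds 0) := by
          simpa using (hconv k).sub (tendsto_const_nhds (x := g.coeff k))
        simpa using h1.norm.mul_const (M^k)
      simpa using tendsto_finset_sum _ hterm
    obtain ⟨n₁, hn₁⟩ := eventually_atTop.mp (hS.eventually_lt_const (by linarith : (0:ℝ) < δ/2))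
    obtain ⟨n₀, hn₀⟩ := h (min ε 1) (lt_min hεpos one_pos)
    set n := max n₀ n₁ + 1 with hndef
    obtain ⟨z, hz1, hz2⟩ := hn₀ n (by omega)
    have hzε : ‖z - ζ‖ < ε := lt_of_lt_of_le hz1 (min_le_left _ _)
    have hz1' : ‖z - ζ‖ < 1 := lt_of_lt_of_le hz1 (min_le_right _ _)
    have hcont : ‖g.eval z - g.eval ζ‖ < δ / 2 := by
      have := hεball (show dist z ζ < ε by rwa [Complex.dist_eq])
      rwa [Complex.dist_eq] at this
    have hclose : ‖g.eval z - (f n).eval z‖ < δ / 2 := by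
      have hzM : ‖z‖ ≤ M := by
        calc ‖z‖ = ‖(z - ζ) + ζ‖ := by ring_nf
          _ ≤ ‖z - ζ‖ + ‖ζ‖ := norm_add_le _ _
          _ ≤ M := by
              rw [hMdef]
              have : (‖z - ζ‖ : ℝ) = ‖z - ζ‖ := rfl
              linarith [hz1']
      have hdegsub : (f n - g).natDegree ≤ N :=
        le_trans (Polynomial.natDegree_sub_le _ _) (max_le (hfn n) hgN)
      have hb := eval_norm_bound N (f n - g) hdegsub z M hzM
      simp only [Polynomial.coeff_sub, Polynomial.eval_sub] at hb
      rw [norm_sub_rev]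
      calc ‖(f n).eval z - g.eval z‖ ≤ _ := hb
        _ < δ / 2 := hn₁ n (by omega)
    have : δ < δ := by
      calc δ = ‖g.eval ζ‖ := hδdef
        _ = ‖(g.eval ζ - g.eval z) + (g.eval z - (f n).eval z) + (f n).eval z‖ := by ring_nf
        _ ≤ ‖(g.eval ζ - g.eval z) + (g.eval z - (f n).eval z)‖ + ‖(f n).eval z‖ := norm_add_le _ _
        _ ≤ ‖g.eval ζ - g.eval z‖ + ‖g.eval z - (f n).eval z‖ + ‖(f n).eval z‖ := by
            linarith [norm_add_le (g.eval ζ - g.eval z) (g.eval z - (f n).eval z)]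
        _ < δ / 2 + δ / 2 + 0 := by
            rw [norm_sub_rev] at hcont
            rw [hz2] at hclose ⊢
            rw [norm_zero]
            linarith
        _ = δ := by ring
    exact absurd this (lt_irrefl δ)
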